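/- Let G(V) be a finite connected network with Gaussian free field {η_v}_{v∈V} viewed as elements of an L² Hilbert space. Then for any vertex w ∈ V and any subset S ⊆ V, √(R_eff(w,S)) equals the L² distance from η_w to the affine hull of {η_u : u ∈ S}. -/

import Mathlib

open MeasureTheory ProbabilityTheory

/-- Dirichlet energy of a function on a network. -/
noncomputable def energy {V : Type*} [Fintype V] (c : V → V → ℝ) (f : V → ℝ) : ℝ :=
  (1 / 2) * ∑ x, ∑ y, c x y * (f x - f y) ^ 2

/-- A network is connected if only constant functions have zero energy. -/
def Connected {V : Type*} [Fintype V] (c : V → V → ℝ) : Prop :=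
  ∀ f : V → ℝ, energy c f = 0 → ∀ x y, f x = f y

/-- Effective conductance between two disjoint vertex sets, via the Dirichlet principle. -/
noncomputable def effCond {V : Type*} [Fintype V] (c : V → V → ℝ) (A B : Set V) : ℝ :=
  sInf {e | ∃ f : V → ℝ, (∀ a ∈ A, f a = 1) ∧ (∀ b ∈ B, f b = 0) ∧ e = energy c f}

/-- Effective resistance between two vertex sets. -/
noncomputable def effRes {V : Type*} [Fintype V] (c : V → V → ℝ) (A B : Set V) : ℝ :=
  1 / effCond c A B

/-- A centered Gaussian process on a finite index set `V`. -/
def IsCenteredGaussianProcess {V Ω : Type*} [Fintype V] [MeasurableSpace Ω]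
    (μ : Measure Ω) (η : V → Ω → ℝ) : Prop :=
  ∀ c : V → ℝ, ∃ v : NNReal,
    Measure.map (fun ω => ∑ x, c x * η x ω) μ = gaussianReal 0 v

namespace GFFAux

variable {V : Type*} [Fintype V]

/-- Bilinear Dirichlet form. -/
noncomputable def Ebil (c : V → V → ℝ) (f g : V → ℝ) : ℝ :=
  (1 / 2) * ∑ x, ∑ y, c x y * (f x - f y) * (g x - g y)

/-- Network Laplacian. -/
noncomputable def lap (c : V → V → ℝ) (f : V → ℝ) (x : V) : ℝ :=
  ∑ y, c x y * (f x - f y)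

lemma Ebil_self (c : V → V → ℝ) (f : V → ℝ) : Ebil c f f = energy c f := by
  unfold Ebil energy
  congr 1
  refine Finset.sum_congr rfl fun x _ => Finset.sum_congr rfl fun y _ => by ring

lemma Ebil_symm (c : V → V → ℝ) (f g : V → ℝ) : Ebil c f g = Ebil c g f := by
  unfold Ebil
  congr 1
  refine Finset.sum_congr rfl fun x _ => Finset.sum_congr rfl fun y _ => by ring

lemma Ebil_add_left (c : V → V → ℝ) (f g k : V → ℝ) :
    Ebil c (f + g) k = Ebil c f k + Ebil c g k := by
  unfold Ebil
  rw [← mul_add, ← Finset.sum_add_distrib]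
  congr 1
  refine Finset.sum_congr rfl fun x _ => ?_
  rw [← Finset.sum_add_distrib]
  refine Finset.sum_congr rfl fun y _ => by simp only [Pi.add_apply]; ring

lemma Ebil_smul_left (c : V → V → ℝ) (t : ℝ) (f k : V → ℝ) :
    Ebil c (t • f) k = t * Ebil c f k := by
  unfold Ebil
  rw [Finset.mul_sum, Finset.mul_sum, Finset.mul_sum]
  refine Finset.sum_congr rfl fun x _ => ?_
  rw [Finset.mul_sum, Finset.mul_sum, Finset.mul_sum]
  refine Finset.sum_congr rfl fun y _ => by simp only [Pi.smul_apply, smul_eq_mul]; ring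

lemma Ebil_add_right (c : V → V → ℝ) (f g k : V → ℝ) :
    Ebil c k (f + g) = Ebil c k f + Ebil c k g := by
  rw [Ebil_symm c k, Ebil_add_left, Ebil_symm c f k, Ebil_symm c g k]

lemma Ebil_smul_right (c : V → V → ℝ) (t : ℝ) (f k : V → ℝ) :
    Ebil c k (t • f) = t * Ebil c k f := by
  rw [Ebil_symm c k, Ebil_smul_left, Ebil_symm c f k]

lemma energy_nonneg {c : V → V → ℝ} (hnn : ∀ a b, 0 ≤ c a b) (f : V → ℝ) :
    0 ≤ energy c f := by
  unfold energy
  have : ∀ x ∈ Finset.univ, (0:ℝ) ≤ ∑ y, c x y * (f x - f y) ^ 2 := fun x _ =>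
    Finset.sum_nonneg fun y _ => mul_nonneg (hnn x y) (sq_nonneg _)
  have h := Finset.sum_nonneg this
  linarith

lemma sum_lap {c : V → V → ℝ} (hsymm : ∀ a b, c a b = c b a) (f : V → ℝ) :
    ∑ x, lap c f x = 0 := by
  unfold lap
  have h1 : ∑ x, ∑ y, c x y * (f x - f y)
      = (∑ x, ∑ y, c x y * f x) - ∑ x, ∑ y, c x y * f y := by
    rw [← Finset.sum_sub_distrib]
    refine Finset.sum_congr rfl fun x _ => ?_
    rw [← Finset.sum_sub_distrib]
    exact Finset.sum_congr rfl fun y _ => by ring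
  have h2 : ∑ x, ∑ y, c x y * f y = ∑ x, ∑ y, c x y * f x := by
    rw [Finset.sum_comm]
    exact Finset.sum_congr rfl fun y _ => Finset.sum_congr rfl fun x _ => by rw [hsymm]
  rw [h1, h2, sub_self]

lemma Ebil_eq_sum_lap {c : V → V → ℝ} (hsymm : ∀ a b, c a b = c b a) (f g : V → ℝ) :
    Ebil c f g = ∑ x, lap c f x * g x := by
  unfold Ebil lap
  have key : ∑ x, ∑ y, c x y * (f x - f y) * (g x - g y)
      = 2 * ∑ x, (∑ y, c x y * (f x - f y)) * g x := by
    have h1 : ∑ x, ∑ y, c x y * (f x - f y) * (g x - g y)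
        = (∑ x, ∑ y, c x y * (f x - f y) * g x)
          + ∑ x, ∑ y, c y x * (f y - f x) * g y := by
      rw [← Finset.sum_add_distrib]
      refine Finset.sum_congr rfl fun x _ => ?_
      rw [← Finset.sum_add_distrib]
      refine Finset.sum_congr rfl fun y _ => ?_
      rw [hsymm y x]; ring
    have h2 : ∑ x, ∑ y, c y x * (f y - f x) * g y
        = ∑ x, ∑ y, c x y * (f x - f y) * g x := Finset.sum_comm
    rw [h1, h2, Finset.mul_sum]
    rw [← Finset.sum_add_distrib]
    refine Finset.sum_congr rfl fun x _ => ?_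
    rw [Finset.sum_mul]
    ring
  rw [key]; ring


lemma Ebil_sq_le {c : V → V → ℝ} (hnn : ∀ a b, 0 ≤ c a b) (f g : V → ℝ) :
    (Ebil c f g) ^ 2 ≤ energy c f * energy c g := by
  have expand : ∀ t : ℝ, 0 ≤ energy c f + 2 * t * Ebil c f g + t ^ 2 * energy c g := by
    intro t
    have h1 : energy c (f + t • g)
        = energy c f + 2 * t * Ebil c f g + t ^ 2 * energy c g := by
      rw [← Ebil_self, Ebil_add_left, Ebil_smul_left, Ebil_add_right, Ebil_smul_right,
        Ebil_add_right, Ebil_smul_right, Ebil_symm c g f, ← Ebil_self, ← Ebil_self]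
      ring
    have := energy_nonneg hnn (f + t • g)
    linarith
  by_cases hg : energy c g = 0
  · have hB : Ebil c f g = 0 := by
      by_contra hB
      have h1 := expand (-(energy c f + 1) / (2 * Ebil c f g))
      rw [hg] at h1
      have h2 : -(energy c f + 1) / (2 * Ebil c f g) * (2 * Ebil c f g)
          = -(energy c f + 1) := by
        field_simp
      nlinarith [energy_nonneg hnn f]
    rw [hB, hg]
    simp [energy_nonneg hnn f]
  · have hgpos : 0 < energy c g := lt_of_le_of_ne (energy_nonneg hnn g) (Ne.symm hg)
    have h1 := expand (-(Ebil c f g) / energy c g)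
    have h2 : -(Ebil c f g) / energy c g * energy c g = -(Ebil c f g) := by
      field_simp
    nlinarith [sq_nonneg (Ebil c f g)]

/-- Existence of the harmonic minimizer with boundary conditions. -/
lemma exists_harmonic {c : V → V → ℝ} (hconn : Connected c)
    (w : V) (S : Set V) (hw : w ∉ S) :
    ∃ h : V → ℝ, h w = 1 ∧ (∀ s ∈ S, h s = 0) ∧
      ∀ g : V → ℝ, g w = 0 → (∀ s ∈ S, g s = 0) → Ebil c h g = 0 := by
  classical
  let W : Submodule ℝ (V → ℝ) :=
    { carrier := {g | g w = 0 ∧ ∀ s ∈ S, g s = 0}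
      add_mem' := fun ha hb => ⟨by simp [ha.1, hb.1], fun s hs => by
        simp [ha.2 s hs, hb.2 s hs]⟩
      zero_mem' := ⟨rfl, fun s _ => rfl⟩
      smul_mem' := fun t a ha => ⟨by simp [ha.1], fun s hs => by simp [ha.2 s hs]⟩ }
  let f₀ : V → ℝ := fun x => if x = w then 1 else 0
  let T : W →ₗ[ℝ] Module.Dual ℝ W :=
    { toFun := fun g =>
        { toFun := fun g' => Ebil c g.1 g'.1
          map_add' := fun a b => by
            simp only [Submodule.coe_add]
            exact Ebil_add_right c a.1 b.1 g.1
          map_smul' := fun t a => by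
            simp only [Submodule.coe_smul, RingHom.id_apply, smul_eq_mul]
            exact Ebil_smul_right c t a.1 g.1 }
      map_add' := fun a b => by
        ext g'
        simp only [Submodule.coe_add]
        exact Ebil_add_left c a.1 b.1 g'.1
      map_smul' := fun t a => by
        ext g'
        simp only [Submodule.coe_smul, RingHom.id_apply, smul_eq_mul]
        exact Ebil_smul_left c t a.1 g'.1 }
  have hTinj : Function.Injective T := by
    rw [← LinearMap.ker_eq_bot, LinearMap.ker_eq_bot']
    intro g hg
    have hgg : Ebil c g.1 g.1 = 0 := by
      have := congrArg (fun φ => φ g) hg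
      exact this
    rw [Ebil_self] at hgg
    have hconst := hconn g.1 hgg
    have : ∀ x, g.1 x = 0 := fun x => by rw [hconst x w, g.2.1]
    exact Subtype.ext (funext this)
  have hTsurj : Function.Surjective T := by
    rw [← LinearMap.range_eq_top]
    apply Submodule.eq_top_of_finrank_eq
    rw [LinearMap.finrank_range_of_inj hTinj, Subspace.dual_finrank_eq]
  obtain ⟨p, hp⟩ := hTsurj
    { toFun := fun g' => -Ebil c f₀ g'.1
      map_add' := fun a b => by
        simp only [Submodule.coe_add]
        rw [Ebil_add_right c a.1 b.1 f₀]
        ring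
      map_smul' := fun t a => by
        simp only [Submodule.coe_smul, RingHom.id_apply, smul_eq_mul]
        rw [Ebil_smul_right c t a.1 f₀]
        ring }
  refine ⟨f₀ + p.1, ?_, ?_, ?_⟩
  · simp only [Pi.add_apply]
    have : f₀ w = 1 := if_pos rfl
    rw [this, p.2.1, add_zero]
  · intro s hs
    simp only [Pi.add_apply]
    have hsw : s ≠ w := fun h => hw (h ▸ hs)
    have : f₀ s = 0 := if_neg hsw
    rw [this, p.2.2 s hs, add_zero]
  · intro g hgw hgS
    have hgW : g ∈ W := ⟨hgw, hgS⟩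
    have := congrArg (fun φ => φ ⟨g, hgW⟩) hp
    simp only [LinearMap.coe_mk, AddHom.coe_mk] at this
    have h2 : Ebil c (f₀ + p.1) g = Ebil c f₀ g + Ebil c p.1 g :=
      Ebil_add_left c f₀ p.1 g
    rw [h2]
    have : Ebil c p.1 g = -Ebil c f₀ g := this
    rw [this]; ring


/-- The Dirichlet infimum is attained at the harmonic minimizer. -/
lemma effCond_eq_energy {c : V → V → ℝ} (hnn : ∀ a b, 0 ≤ c a b)
    (w : V) (S : Set V) (h : V → ℝ) (hw1 : h w = 1) (hS : ∀ s ∈ S, h s = 0)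
    (hharm : ∀ g : V → ℝ, g w = 0 → (∀ s ∈ S, g s = 0) → Ebil c h g = 0) :
    effCond c {w} S = energy c h := by
  have hmem : energy c h ∈
      {e | ∃ f : V → ℝ, (∀ a ∈ ({w} : Set V), f a = 1) ∧ (∀ b ∈ S, f b = 0) ∧ e = energy c f} :=
    ⟨h, fun a ha => by rw [Set.mem_singleton_iff] at ha; rw [ha, hw1], hS, rfl⟩
  have hbdd : ∀ e ∈ {e | ∃ f : V → ℝ, (∀ a ∈ ({w} : Set V), f a = 1) ∧ (∀ b ∈ S, f b = 0) ∧
      e = energy c f}, (0:ℝ) ≤ e := by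
    rintro e ⟨f, _, _, rfl⟩
    exact energy_nonneg hnn f
  refine le_antisymm (csInf_le ⟨0, hbdd⟩ hmem) (le_csInf ⟨_, hmem⟩ ?_)
  rintro e ⟨f, hf1, hfS, rfl⟩
  have hd : Ebil c h (f - h) = 0 := by
    refine hharm (f - h) ?_ ?_
    · simp [hf1 w rfl, hw1]
    · intro s hs; simp [hfS s hs, hS s hs]
  have hexp : energy c f = energy c h + 2 * Ebil c h (f - h) + energy c (f - h) := by
    have hfh : f = h + (f - h) := by ring_nf
    calc energy c f = energy c (h + (f - h)) := by rw [← hfh]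
      _ = energy c h + 2 * Ebil c h (f - h) + energy c (f - h) := by
          rw [← Ebil_self, Ebil_add_left, Ebil_add_right, Ebil_add_right,
            Ebil_symm c (f - h) h, ← Ebil_self, ← Ebil_self]
          ring
  have := energy_nonneg hnn (f - h)
  rw [hexp, hd]
  linarith

lemma lap_sub (c : V → V → ℝ) (f g : V → ℝ) (x : V) :
    lap c (f - g) x = lap c f x - lap c g x := by
  unfold lap
  rw [← Finset.sum_sub_distrib]
  exact Finset.sum_congr rfl fun y _ => by simp only [Pi.sub_apply]; ring

lemma lap_smul (c : V → V → ℝ) (t : ℝ) (f : V → ℝ) (x : V) :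
    lap c (t • f) x = t * lap c f x := by
  unfold lap
  rw [Finset.mul_sum]
  exact Finset.sum_congr rfl fun y _ => by simp only [Pi.smul_apply, smul_eq_mul]; ring

/-- A function with vanishing Laplacian is constant. -/
lemma lap_const {c : V → V → ℝ} (hsymm : ∀ a b, c a b = c b a) (hconn : Connected c)
    (f : V → ℝ) (hf : ∀ x, lap c f x = 0) (x y : V) : f x = f y := by
  apply hconn
  rw [← Ebil_self, Ebil_eq_sum_lap hsymm]
  exact Finset.sum_eq_zero fun z _ => by rw [hf z, zero_mul]

/-- The rooted Green potential: `lap φ = δ_u - δ_v` and `φ u - φ v = effRes {u} {v}`. -/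
lemma exists_green [DecidableEq V] {c : V → V → ℝ} (hsymm : ∀ a b, c a b = c b a)
    (hnn : ∀ a b, 0 ≤ c a b) (hconn : Connected c) (u v : V) :
    ∃ φ : V → ℝ, (∀ x, lap c φ x =
        (if x = u then (1:ℝ) else 0) - (if x = v then (1:ℝ) else 0)) ∧
      φ u - φ v = effRes c {u} {v} := by
  by_cases huv : u = v
  · subst huv
    refine ⟨0, fun x => by simp [lap], ?_⟩
    have hempty : {e | ∃ f : V → ℝ, (∀ a ∈ ({u} : Set V), f a = 1) ∧
        (∀ b ∈ ({u} : Set V), f b = 0) ∧ e = energy c f} = ∅ := by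
      ext e
      simp only [Set.mem_setOf_eq, Set.mem_empty_iff_false, iff_false]
      rintro ⟨f, h1, h2, _⟩
      have := h1 u rfl
      have := h2 u rfl
      linarith
    simp only [effRes, effCond, hempty, Real.sInf_empty]
    norm_num
  · obtain ⟨h, hw1, hS, hharm⟩ := exists_harmonic hconn u {v}
      (by simp [Set.mem_singleton_iff, huv])
    set C := energy c h with hCdef
    have hCnn : 0 ≤ C := energy_nonneg hnn h
    have hCne : C ≠ 0 := by
      intro hC0
      have := hconn h (hCdef ▸ hC0) u v
      rw [hw1, hS v rfl] at this
      norm_num at this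
    have hCpos : 0 < C := lt_of_le_of_ne hCnn (Ne.symm hCne)
    -- lap h vanishes off {u, v}
    have hlap0 : ∀ x, x ≠ u → x ≠ v → lap c h x = 0 := by
      intro x hxu hxv
      have := hharm (fun z => if z = x then 1 else 0) (by simp [Ne.symm hxu])
        (fun s hs => by rw [Set.mem_singleton_iff] at hs; simp [hs, Ne.symm hxv])
      rw [Ebil_eq_sum_lap hsymm] at this
      simpa using this
    -- lap h u = C
    have hlapu : lap c h u = C := by
      have h1 : Ebil c h h = ∑ x, lap c h x * h x := Ebil_eq_sum_lap hsymm h h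
      rw [Ebil_self] at h1
      have h2 : ∑ x, lap c h x * h x = lap c h u * h u := by
        apply Finset.sum_eq_single
        · intro x _ hxu
          by_cases hxv : x = v
          · rw [hxv, hS v rfl, mul_zero]
          · rw [hlap0 x hxu hxv, zero_mul]
        · intro hx; exact absurd (Finset.mem_univ u) hx
      rw [h2, hw1, mul_one] at h1
      exact h1.symm
    have hlapv : lap c h v = -C := by
      have hsum := sum_lap hsymm h
      have h2 : ∑ x, lap c h x = lap c h u + lap c h v := by
        rw [← Finset.sum_filter_add_sum_filter_not Finset.univ (fun x => x = u ∨ x = v)]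
        have e1 : (Finset.univ.filter (fun x => x = u ∨ x = v)) = {u, v} := by
          ext x; simp [Finset.mem_filter, Finset.mem_insert]
        have e2 : ∑ x ∈ Finset.univ.filter (fun x => ¬(x = u ∨ x = v)), lap c h x = 0 := by
          apply Finset.sum_eq_zero
          intro x hx
          simp only [Finset.mem_filter, not_or] at hx
          exact hlap0 x hx.2.1 hx.2.2
        rw [e1, e2, add_zero, Finset.sum_pair huv]
      rw [h2] at hsum
      linarith [hlapu ▸ hsum]
    refine ⟨C⁻¹ • h, ?_, ?_⟩
    · intro x
      rw [lap_smul]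
      by_cases hxu : x = u
      · subst hxu
        rw [hlapu, if_pos rfl, if_neg huv]
        field_simp
        norm_num
      · by_cases hxv : x = v
        · subst hxv
          rw [hlapv, if_neg hxu, if_pos rfl]
          field_simp
          norm_num
        · rw [hlap0 x hxu hxv, if_neg hxu, if_neg hxv]
          ring
    · have hcond : effCond c {u} {v} = C :=
        effCond_eq_energy hnn u {v} h hw1 hS hharm
      simp only [Pi.smul_apply, smul_eq_mul, effRes, hcond, hw1, hS v rfl]
      field_simp
      norm_num


section Green

variable [DecidableEq V] {c : V → V → ℝ}

/-- Sum against a difference of deltas. -/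
lemma sum_delta_mul (a b : V) (f : V → ℝ) :
    ∑ x, ((if x = a then (1:ℝ) else 0) - (if x = b then (1:ℝ) else 0)) * f x
      = f a - f b := by
  have : ∀ x, ((if x = a then (1:ℝ) else 0) - (if x = b then (1:ℝ) else 0)) * f x
      = (if x = a then f x else 0) - (if x = b then f x else 0) := by
    intro x
    by_cases hxa : x = a <;> by_cases hxb : x = b <;>
      simp [hxa, hxb] <;> split_ifs <;> simp_all <;> ring
  rw [Finset.sum_congr rfl fun x _ => this x, Finset.sum_sub_distrib,
    Finset.sum_ite_eq' Finset.univ a f, Finset.sum_ite_eq' Finset.univ b f]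
  simp

lemma lap_comb (b : V → ℝ) (F : V → V → ℝ) (x : V) :
    lap c (fun z => ∑ u, b u * F u z) x = ∑ u, b u * lap c (F u) x := by
  unfold lap
  have : ∀ y, c x y * ((∑ u, b u * F u x) - ∑ u, b u * F u y)
      = ∑ u, b u * (c x y * (F u x - F u y)) := by
    intro y
    rw [← Finset.sum_sub_distrib, Finset.mul_sum]
    exact Finset.sum_congr rfl fun u _ => by ring
  rw [Finset.sum_congr rfl fun y _ => this y, Finset.sum_comm]
  exact Finset.sum_congr rfl fun u _ => by rw [Finset.mul_sum]

variable (hsymm : ∀ a b, c a b = c b a) (hnn : ∀ a b, 0 ≤ c a b) (hconn : Connected c)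
  (v₀ : V) (ψ : V → V → ℝ)
  (hψ : ∀ u, (∀ x, lap c (ψ u) x =
      (if x = u then (1:ℝ) else 0) - (if x = v₀ then (1:ℝ) else 0)) ∧
    ψ u u - ψ u v₀ = effRes c {u} {v₀})

/-- Green kernel rooted at `v₀`. -/
noncomputable def qk (v₀ : V) (ψ : V → V → ℝ) (u v : V) : ℝ := ψ u v - ψ u v₀

include hsymm hψ in
lemma qk_eq_Ebil (u v : V) : qk v₀ ψ u v = Ebil c (ψ v) (ψ u) := by
  rw [Ebil_eq_sum_lap hsymm]
  rw [Finset.sum_congr rfl fun x _ => by rw [(hψ v).1 x]]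
  rw [sum_delta_mul v v₀ (ψ u)]
  rfl

include hsymm hψ in
lemma qk_symm (u v : V) : qk v₀ ψ u v = qk v₀ ψ v u := by
  rw [qk_eq_Ebil hsymm v₀ ψ hψ, qk_eq_Ebil hsymm v₀ ψ hψ, Ebil_symm]

include hsymm hnn hconn hψ in
lemma effRes_eq_qk (u v : V) :
    effRes c {u} {v} = qk v₀ ψ u u + qk v₀ ψ v v - qk v₀ ψ u v - qk v₀ ψ v u := by
  obtain ⟨φ, hφlap, hφval⟩ := exists_green hsymm hnn hconn u v
  have hd : ∀ x, lap c (ψ u - ψ v - φ) x = 0 := by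
    intro x
    rw [lap_sub, lap_sub, (hψ u).1 x, (hψ v).1 x, hφlap x]
    ring
  have hconst := lap_const hsymm hconn _ hd u v
  simp only [Pi.sub_apply] at hconst
  unfold qk
  rw [← hφval]
  linarith

include hψ in
lemma lap_comb_eq (β : V → ℝ) (hβ : ∑ u, β u = 0) (x : V) :
    lap c (fun z => ∑ u, β u * ψ u z) x = β x := by
  rw [lap_comb]
  rw [Finset.sum_congr rfl fun u _ => by rw [(hψ u).1 x]]
  have h1 : ∑ u, β u * ((if x = u then (1:ℝ) else 0) - (if x = v₀ then (1:ℝ) else 0))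
      = (∑ u, β u * (if x = u then (1:ℝ) else 0))
        - (∑ u, β u) * (if x = v₀ then (1:ℝ) else 0) := by
    rw [Finset.sum_mul, ← Finset.sum_sub_distrib]
    exact Finset.sum_congr rfl fun u _ => by ring
  rw [h1, hβ, zero_mul, sub_zero]
  have h2 : ∀ u, β u * (if x = u then (1:ℝ) else 0) = if u = x then β u else 0 := by
    intro u
    by_cases hxu : x = u
    · subst hxu; simp
    · simp [hxu, Ne.symm hxu]
  rw [Finset.sum_congr rfl fun u _ => h2 u, Finset.sum_ite_eq' Finset.univ x β]
  simp

include hψ in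
lemma sum_qk_eq (β : V → ℝ) (hβ : ∑ u, β u = 0) :
    ∑ u, ∑ v, β u * β v * qk v₀ ψ u v = ∑ x, (∑ u, β u * ψ u x) * β x := by
  have h1 : ∀ u, ∑ v, β u * β v * qk v₀ ψ u v = ∑ v, β u * β v * ψ u v := by
    intro u
    have : ∑ v, β u * β v * qk v₀ ψ u v
        = (∑ v, β u * β v * ψ u v) - (β u * ψ u v₀) * ∑ v, β v := by
      rw [Finset.mul_sum, ← Finset.sum_sub_distrib]
      exact Finset.sum_congr rfl fun v _ => by unfold qk; ring
    rw [this, hβ, mul_zero, sub_zero]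
  rw [Finset.sum_congr rfl fun u _ => h1 u, Finset.sum_comm]
  refine Finset.sum_congr rfl fun x _ => ?_
  rw [Finset.sum_mul]
  exact Finset.sum_congr rfl fun u _ => by ring

include hsymm hconn hψ in
/-- The quadratic form of the Green kernel evaluated via any potential `f` with `lap f = β`. -/
lemma sum_qk_eq_potential (β : V → ℝ) (hβ : ∑ u, β u = 0)
    (f : V → ℝ) (hf : ∀ x, lap c f x = β x) :
    ∑ u, ∑ v, β u * β v * qk v₀ ψ u v = ∑ x, f x * β x := by
  rw [sum_qk_eq v₀ ψ hψ β hβ]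
  set F := fun z => ∑ u, β u * ψ u z with hF
  have hlapF : ∀ x, lap c F x = β x := lap_comb_eq v₀ ψ hψ β hβ
  have hd : ∀ x, lap c (f - F) x = 0 := fun x => by
    rw [lap_sub, hf x, hlapF x, sub_self]
  have hconst := lap_const hsymm hconn _ hd
  have hfx : ∀ x, f x = F x + (f v₀ - F v₀) := by
    intro x
    have := hconst x v₀
    simp only [Pi.sub_apply] at this
    linarith
  have hsum : ∑ x, f x * β x = (∑ x, F x * β x) + (f v₀ - F v₀) * ∑ x, β x := by
    rw [Finset.mul_sum, ← Finset.sum_add_distrib]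
    refine Finset.sum_congr rfl fun x _ => ?_
    rw [hfx x]; ring
  rw [hsum, hβ, mul_zero, add_zero]

include hsymm hψ in
/-- The Green quadratic form equals the energy of the combination potential. -/
lemma sum_qk_eq_energy (β : V → ℝ) (hβ : ∑ u, β u = 0) :
    ∑ u, ∑ v, β u * β v * qk v₀ ψ u v = energy c (fun z => ∑ u, β u * ψ u z) := by
  rw [sum_qk_eq v₀ ψ hψ β hβ, ← Ebil_self, Ebil_eq_sum_lap hsymm]
  refine Finset.sum_congr rfl fun x _ => ?_
  rw [lap_comb_eq v₀ ψ hψ β hβ x]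
  ring

end Green


section Helpers

variable [DecidableEq V]

lemma sum_delta_mul' (a : V) (f : V → ℝ) :
    ∑ x, (if x = a then (1:ℝ) else 0) * f x = f a := by
  have : ∀ x, (if x = a then (1:ℝ) else 0) * f x = if x = a then f x else 0 := by
    intro x; by_cases hx : x = a <;> simp [hx]
  rw [Finset.sum_congr rfl fun x _ => this x, Finset.sum_ite_eq' Finset.univ a f]
  simp

lemma sum_mul_delta (a : V) (f : V → ℝ) :
    ∑ x, f x * (if x = a then (1:ℝ) else 0) = f a := by
  rw [Finset.sum_congr rfl fun x _ => mul_comm (f x) _]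
  exact sum_delta_mul' a f

lemma sum_delta_one (a : V) : ∑ x : V, (if x = a then (1:ℝ) else 0) = 1 := by
  have := sum_delta_mul' a (fun _ => (1:ℝ))
  simpa using this

variable {c : V → V → ℝ}

lemma lap_harmonic_zero (hsymm : ∀ a b, c a b = c b a) {w : V} {S : Set V} {h : V → ℝ}
    (hharm : ∀ g : V → ℝ, g w = 0 → (∀ s ∈ S, g s = 0) → Ebil c h g = 0)
    (x : V) (hxw : x ≠ w) (hxS : x ∉ S) : lap c h x = 0 := by
  have hh := hharm (fun z => if z = x then 1 else 0) (by simp [Ne.symm hxw])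
    (fun s hs => by
      have : s ≠ x := fun he => hxS (he ▸ hs)
      simp [this])
  rw [Ebil_eq_sum_lap hsymm, sum_mul_delta x (lap c h)] at hh
  exact hh

lemma lap_harmonic_w (hsymm : ∀ a b, c a b = c b a) {w : V} {S : Set V} {h : V → ℝ}
    (hw1 : h w = 1) (hS0 : ∀ s ∈ S, h s = 0)
    (hharm : ∀ g : V → ℝ, g w = 0 → (∀ s ∈ S, g s = 0) → Ebil c h g = 0) :
    lap c h w = energy c h := by
  have h1 : energy c h = ∑ x, lap c h x * h x := by
    rw [← Ebil_self, Ebil_eq_sum_lap hsymm]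
  have h2 : ∑ x, lap c h x * h x = lap c h w * h w := by
    refine Finset.sum_eq_single w (fun x _ hxw => ?_)
      (fun hx => absurd (Finset.mem_univ w) hx)
    by_cases hxS : x ∈ S
    · rw [hS0 x hxS, mul_zero]
    · rw [lap_harmonic_zero hsymm hharm x hxw hxS, zero_mul]
  rw [h1, h2, hw1, mul_one]

end Helpers

end GFFAux

lemma integrable_sq_gaussianReal (v : NNReal) :
    Integrable (fun x : ℝ => x ^ 2) (gaussianReal 0 v) := by
  by_cases hv : v = 0
  · subst hv
    rw [gaussianReal_zero_var]
    exact (integrable_const ((0:ℝ) ^ 2)).congr (ae_eq_dirac (fun x : ℝ => x ^ 2)).symm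
  · rw [gaussianReal_of_var_ne_zero _ hv]
    rw [integrable_withDensity_iff (measurable_gaussianPDF _ _)
      (ae_of_all _ fun x => ENNReal.ofReal_lt_top)]
    have hv' : (0:ℝ) < (v:ℝ) := by positivity
    have heq : (fun x : ℝ => x ^ 2 * (gaussianPDF 0 v x).toReal)
        = fun x => (Real.sqrt (2 * Real.pi * v))⁻¹
            * (x ^ 2 * Real.exp (-(1/(2*(v:ℝ))) * x ^ 2)) := by
      funext x
      rw [gaussianPDF, ENNReal.toReal_ofReal (gaussianPDFReal_nonneg _ _ _), gaussianPDFReal]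
      have harg : -(x - 0) ^ 2 / (2 * (v:ℝ)) = -(1/(2*(v:ℝ))) * x ^ 2 := by
        rw [sub_zero]; field_simp
      rw [harg]; ring
    rw [heq]
    have hb : (0:ℝ) < 1/(2*(v:ℝ)) := by positivity
    have h2 := integrable_rpow_mul_exp_neg_mul_sq hb (s := 2) (by norm_num)
    have h3 : Integrable (fun x : ℝ => x ^ 2 * Real.exp (-(1/(2*(v:ℝ))) * x ^ 2)) := by
      have : (fun x : ℝ => x ^ (2:ℝ) * Real.exp (-(1/(2*(v:ℝ))) * x ^ 2))
          = fun x : ℝ => x ^ 2 * Real.exp (-(1/(2*(v:ℝ))) * x ^ 2) := by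
        funext x; rw [Real.rpow_two]
      rwa [this] at h2
    exact h3.const_mul _

lemma integrable_sq_comb {V Ω : Type*} [Fintype V] [MeasurableSpace Ω]
    (μ : Measure Ω) (η : V → Ω → ℝ) (hmeas : ∀ v, Measurable (η v))
    (hG : ∀ c : V → ℝ, ∃ v : NNReal,
      Measure.map (fun ω => ∑ x, c x * η x ω) μ = gaussianReal 0 v)
    (cc : V → ℝ) :
    Integrable (fun ω => (∑ x, cc x * η x ω) ^ 2) μ := by
  obtain ⟨v, hv⟩ := hG cc
  have hXm : Measurable (fun ω => ∑ x, cc x * η x ω) :=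
    Finset.measurable_sum _ fun x _ => (hmeas x).const_mul _
  have h1 : Integrable (fun x : ℝ => x ^ 2)
      (Measure.map (fun ω => ∑ x, cc x * η x ω) μ) := by
    rw [hv]; exact integrable_sq_gaussianReal v
  rw [integrable_map_measure
    (measurable_id'.pow_const 2).aestronglyMeasurable hXm.aemeasurable] at h1
  exact h1

open GFFAux

/-- For the Gaussian free field `{η_v}` on a finite connected network (the centered
Gaussian process with `η_{v₀} = 0` and `E[(η_u − η_v)²] = R_eff(u,v)`), for any vertex `w`
and any subset `S ⊆ V`, `√(R_eff(w,S))` equals the `L²` distance from `η_w` to the affine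
hull of `{η_u : u ∈ S}`. -/
theorem sqrt_effRes_eq_dist_affineHull {V Ω : Type*} [Fintype V]
    [MeasurableSpace Ω] (μ : Measure Ω) [IsProbabilityMeasure μ]
    (c : V → V → ℝ) (hsymm : ∀ a b, c a b = c b a) (hnn : ∀ a b, 0 ≤ c a b)
    (hconn : Connected c)
    (v₀ : V) (η : V → Ω → ℝ) (hmeas : ∀ v, Measurable (η v))
    (hG : IsCenteredGaussianProcess μ η)
    (h0 : ∀ᵐ ω ∂μ, η v₀ ω = 0)
    (hres : ∀ u v, ∫ ω, (η u ω - η v ω) ^ 2 ∂μ = effRes c {u} {v})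
    (w : V) (S : Set V) :
    Real.sqrt (effRes c {w} S) =
      sInf {t : ℝ | ∃ α : V → ℝ, (∀ u, u ∉ S → α u = 0) ∧ (∑ u, α u) = 1 ∧
        t = Real.sqrt (∫ ω, (η w ω - ∑ u, α u * η u ω) ^ 2 ∂μ)} := by
  classical
  -- integrability facts
  have hcomb := integrable_sq_comb μ η hmeas hG
  have hsq : ∀ u, Integrable (fun ω => (η u ω) ^ 2) μ := by
    intro u
    have h1 := hcomb (fun x => if x = u then 1 else 0)
    have he : (fun ω => (∑ x, (if x = u then (1:ℝ) else 0) * η x ω) ^ 2)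
        = fun ω => (η u ω) ^ 2 := by
      funext ω; rw [sum_delta_mul' u (fun x => η x ω)]
    rwa [he] at h1
  have hsq2 : ∀ u v', Integrable (fun ω => (η u ω + η v' ω) ^ 2) μ := by
    intro u v'
    have h1 := hcomb (fun x => (if x = u then 1 else 0) + (if x = v' then 1 else 0))
    have he : (fun ω => (∑ x, ((if x = u then (1:ℝ) else 0)
          + (if x = v' then (1:ℝ) else 0)) * η x ω) ^ 2)
        = fun ω => (η u ω + η v' ω) ^ 2 := by
      funext ω
      congr 1
      have hterm : ∀ x, ((if x = u then (1:ℝ) else 0) + (if x = v' then (1:ℝ) else 0)) * η x ω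
          = (if x = u then (1:ℝ) else 0) * η x ω + (if x = v' then (1:ℝ) else 0) * η x ω :=
        fun x => by ring
      rw [Finset.sum_congr rfl fun x _ => hterm x, Finset.sum_add_distrib,
        sum_delta_mul' u (fun x => η x ω), sum_delta_mul' v' (fun x => η x ω)]
    rwa [he] at h1
  have hmul : ∀ u v', Integrable (fun ω => η u ω * η v' ω) μ := by
    intro u v'
    have heq : (fun ω => η u ω * η v' ω)
        = fun ω => (1/2) * (((η u ω + η v' ω) ^ 2 - (η u ω) ^ 2) - (η v' ω) ^ 2) := by
      funext ω; ring
    rw [heq]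
    exact (((hsq2 u v').sub (hsq u)).sub (hsq v')).const_mul _
  set g : V → V → ℝ := fun u v' => ∫ ω, η u ω * η v' ω ∂μ with hgdef
  have hexp : ∀ u v', ∫ ω, (η u ω - η v' ω) ^ 2 ∂μ = g u u - 2 * g u v' + g v' v' := by
    intro u v'
    have heq : (fun ω => (η u ω - η v' ω) ^ 2)
        = fun ω => (η u ω * η u ω - 2 * (η u ω * η v' ω)) + η v' ω * η v' ω := by
      funext ω; ring
    have h3 : Integrable (fun ω => η u ω * η u ω - 2 * (η u ω * η v' ω)) μ :=
      (hmul u u).sub ((hmul u v').const_mul 2)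
    have h4 : Integrable (fun ω => 2 * (η u ω * η v' ω)) μ := (hmul u v').const_mul 2
    rw [heq, integral_add h3 (hmul v' v'), integral_sub (hmul u u) h4,
      integral_const_mul]
  have hRg : ∀ u v', effRes c {u} {v'} = g u u - 2 * g u v' + g v' v' := by
    intro u v'
    rw [← hres u v', hexp u v']
  have hguu : ∀ u, g u u = effRes c {u} {v₀} := by
    intro u
    have h1 : ∫ ω, (η u ω - η v₀ ω) ^ 2 ∂μ = ∫ ω, η u ω * η u ω ∂μ := by
      refine integral_congr_ae ?_
      filter_upwards [h0] with ω hω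
      rw [hω]; ring
    have h2 := hres u v₀
    rw [h1] at h2
    exact h2
  -- Green potentials
  obtain ⟨ψ, hψ⟩ : ∃ ψ : V → V → ℝ, ∀ u,
      (∀ x, lap c (ψ u) x = (if x = u then (1:ℝ) else 0) - (if x = v₀ then (1:ℝ) else 0)) ∧
        ψ u u - ψ u v₀ = effRes c {u} {v₀} :=
    ⟨fun u => Classical.choose (exists_green hsymm hnn hconn u v₀),
      fun u => Classical.choose_spec (exists_green hsymm hnn hconn u v₀)⟩
  have hq0 : ∀ x, qk v₀ ψ v₀ x = 0 := by
    intro x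
    have hlapz : ∀ z, lap c (ψ v₀) z = 0 := fun z => by rw [(hψ v₀).1 z]; ring
    have hcst := lap_const hsymm hconn (ψ v₀) hlapz x v₀
    unfold qk
    rw [hcst, sub_self]
  have hquu : ∀ u, qk v₀ ψ u u = effRes c {u} {v₀} := by
    intro u
    have h1 := effRes_eq_qk hsymm hnn hconn v₀ ψ hψ u v₀
    have h2 := qk_symm hsymm v₀ ψ hψ u v₀
    rw [hq0 v₀, hq0 u] at h1
    rw [hq0 u] at h2
    rw [h2] at h1
    linarith
  have hgq : ∀ u v', g u v' = qk v₀ ψ u v' := by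
    intro u v'
    have h1 := hRg u v'
    have h2 := effRes_eq_qk hsymm hnn hconn v₀ ψ hψ u v'
    have h3 := qk_symm hsymm v₀ ψ hψ u v'
    rw [hguu u, hguu v'] at h1
    rw [hquu u, hquu v'] at h2
    rw [h3] at h2
    linarith
  -- variance formula
  have hVar : ∀ β : V → ℝ, ∫ ω, (∑ u, β u * η u ω) ^ 2 ∂μ
      = ∑ u, ∑ v', β u * β v' * qk v₀ ψ u v' := by
    intro β
    have hsqpt : ∀ ω, (∑ u, β u * η u ω) ^ 2
        = ∑ u, ∑ v', (β u * β v') * (η u ω * η v' ω) := by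
      intro ω
      rw [sq, Finset.sum_mul_sum]
      exact Finset.sum_congr rfl fun u _ => Finset.sum_congr rfl fun v' _ => by ring
    calc ∫ ω, (∑ u, β u * η u ω) ^ 2 ∂μ
        = ∫ ω, ∑ u, ∑ v', (β u * β v') * (η u ω * η v' ω) ∂μ :=
          integral_congr_ae (ae_of_all _ fun ω => hsqpt ω)
      _ = ∑ u, ∑ v', (β u * β v') * g u v' := by
          rw [integral_finset_sum _
            (fun u _ => integrable_finset_sum _ (fun v' _ => (hmul u v').const_mul _))]
          refine Finset.sum_congr rfl fun u _ => ?_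
          rw [integral_finset_sum _ (fun v' _ => (hmul u v').const_mul _)]
          exact Finset.sum_congr rfl fun v' _ => integral_const_mul _ _
      _ = ∑ u, ∑ v', β u * β v' * qk v₀ ψ u v' :=
          Finset.sum_congr rfl fun u _ => Finset.sum_congr rfl fun v' _ => by rw [hgq u v']
  have hpt : ∀ (α : V → ℝ) ω, η w ω - ∑ u, α u * η u ω
      = ∑ u, ((if u = w then (1:ℝ) else 0) - α u) * η u ω := by
    intro α ω
    have h1 : ∑ u, ((if u = w then (1:ℝ) else 0) - α u) * η u ω
        = (∑ u, (if u = w then (1:ℝ) else 0) * η u ω) - ∑ u, α u * η u ω := by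
      rw [← Finset.sum_sub_distrib]
      exact Finset.sum_congr rfl fun u _ => by ring
    rw [h1, sum_delta_mul' w (fun x => η x ω)]
  have hint : ∀ α : V → ℝ, ∫ ω, (η w ω - ∑ u, α u * η u ω) ^ 2 ∂μ
      = ∑ u, ∑ v', ((if u = w then (1:ℝ) else 0) - α u)
          * ((if v' = w then (1:ℝ) else 0) - α v') * qk v₀ ψ u v' := by
    intro α
    have heq2 : (fun ω => (η w ω - ∑ u, α u * η u ω) ^ 2)
        = fun ω => (∑ u, ((if u = w then (1:ℝ) else 0) - α u) * η u ω) ^ 2 := by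
      funext ω
      rw [hpt α ω]
    rw [heq2]
    exact hVar _
  -- case split
  by_cases hw : w ∈ S
  · -- degenerate: w ∈ S
    have hLHS : effCond c {w} S = 0 := by
      have hempty : {e | ∃ f : V → ℝ, (∀ a ∈ ({w} : Set V), f a = 1) ∧ (∀ b ∈ S, f b = 0) ∧
          e = energy c f} = ∅ := by
        ext e
        simp only [Set.mem_setOf_eq, Set.mem_empty_iff_false, iff_false]
        rintro ⟨f, h1, h2, _⟩
        have ha := h1 w rfl
        have hb := h2 w hw
        rw [ha] at hb
        norm_num at hb
      rw [effCond, hempty, Real.sInf_empty]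
    have h0mem : (0:ℝ) ∈ {t : ℝ | ∃ α : V → ℝ, (∀ u, u ∉ S → α u = 0) ∧ (∑ u, α u) = 1 ∧
        t = Real.sqrt (∫ ω, (η w ω - ∑ u, α u * η u ω) ^ 2 ∂μ)} := by
      refine ⟨fun u => if u = w then 1 else 0, fun u hu => ?_, ?_, ?_⟩
      · have : u ≠ w := fun he => hu (he ▸ hw)
        simp [this]
      · exact sum_delta_one w
      · have hz : ∀ ω, (η w ω - ∑ u, (if u = w then (1:ℝ) else 0) * η u ω) ^ 2 = 0 := by
          intro ω
          rw [sum_delta_mul' w (fun x => η x ω)]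
          ring
        have : ∫ ω, (η w ω - ∑ u, (if u = w then (1:ℝ) else 0) * η u ω) ^ 2 ∂μ = 0 :=
          integral_eq_zero_of_ae (ae_of_all _ hz)
        rw [this, Real.sqrt_zero]
    have hbdd0 : ∀ t ∈ {t : ℝ | ∃ α : V → ℝ, (∀ u, u ∉ S → α u = 0) ∧ (∑ u, α u) = 1 ∧
        t = Real.sqrt (∫ ω, (η w ω - ∑ u, α u * η u ω) ^ 2 ∂μ)}, (0:ℝ) ≤ t := by
      rintro t ⟨α, _, _, rfl⟩
      exact Real.sqrt_nonneg _
    rw [effRes, hLHS, div_zero, Real.sqrt_zero]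
    exact le_antisymm (le_csInf ⟨0, h0mem⟩ hbdd0) (csInf_le ⟨0, hbdd0⟩ h0mem)
  · rcases S.eq_empty_or_nonempty with rfl | hSne
    · -- degenerate: S = ∅
      have hTempty : {t : ℝ | ∃ α : V → ℝ, (∀ u, u ∉ (∅ : Set V) → α u = 0) ∧ (∑ u, α u) = 1 ∧
          t = Real.sqrt (∫ ω, (η w ω - ∑ u, α u * η u ω) ^ 2 ∂μ)} = ∅ := by
        ext t
        simp only [Set.mem_setOf_eq, Set.mem_empty_iff_false, iff_false]
        rintro ⟨α, hα1, hα2, _⟩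
        have hz : ∑ u, α u = 0 :=
          Finset.sum_eq_zero fun u _ => hα1 u (Set.notMem_empty u)
        rw [hz] at hα2
        exact zero_ne_one hα2
      have h0mem : (0:ℝ) ∈ {e | ∃ f : V → ℝ, (∀ a ∈ ({w} : Set V), f a = 1) ∧
          (∀ b ∈ (∅ : Set V), f b = 0) ∧ e = energy c f} := by
        refine ⟨fun _ => 1, fun a _ => rfl, fun b hb => absurd hb (Set.notMem_empty b), ?_⟩
        unfold energy
        simp
      have hbdd : ∀ e ∈ {e | ∃ f : V → ℝ, (∀ a ∈ ({w} : Set V), f a = 1) ∧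
          (∀ b ∈ (∅ : Set V), f b = 0) ∧ e = energy c f}, (0:ℝ) ≤ e := by
        rintro e ⟨f, _, _, rfl⟩
        exact energy_nonneg hnn f
      have hLHS : effCond c {w} (∅ : Set V) = 0 :=
        le_antisymm (csInf_le ⟨0, hbdd⟩ h0mem) (le_csInf ⟨0, h0mem⟩ hbdd)
      rw [effRes, hLHS, div_zero, Real.sqrt_zero, hTempty, Real.sInf_empty]
    · -- main case: w ∉ S, S nonempty
      obtain ⟨h, hw1, hS0, hharm⟩ := exists_harmonic hconn w S hw
      set C := energy c h with hCdef
      have hCnn : 0 ≤ C := energy_nonneg hnn h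
      have hCne : C ≠ 0 := by
        intro hC0
        obtain ⟨s, hs⟩ := hSne
        have := hconn h hC0 w s
        rw [hw1, hS0 s hs] at this
        norm_num at this
      have hCpos : 0 < C := lt_of_le_of_ne hCnn (Ne.symm hCne)
      have hlap0 : ∀ x, x ≠ w → x ∉ S → lap c h x = 0 :=
        fun x hxw hxS => lap_harmonic_zero hsymm hharm x hxw hxS
      have hlapw : lap c h w = C := lap_harmonic_w hsymm hw1 hS0 hharm
      have hcond : effCond c {w} S = C := effCond_eq_energy hnn w S h hw1 hS0 hharm
      -- lower bound
      have hlow : ∀ α : V → ℝ, (∀ u, u ∉ S → α u = 0) → (∑ u, α u) = 1 →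
          1 / C ≤ ∫ ω, (η w ω - ∑ u, α u * η u ω) ^ 2 ∂μ := by
        intro α hsupp hsum
        have hβ0 : ∑ u, ((if u = w then (1:ℝ) else 0) - α u) = 0 := by
          rw [Finset.sum_sub_distrib, sum_delta_one w, hsum, sub_self]
        rw [hint α,
          sum_qk_eq_energy hsymm v₀ ψ hψ (fun u => (if u = w then (1:ℝ) else 0) - α u) hβ0]
        have hEb : Ebil c
            (fun z => ∑ u, ((if u = w then (1:ℝ) else 0) - α u) * ψ u z) h = 1 := by
          rw [Ebil_eq_sum_lap hsymm, Finset.sum_congr rfl fun x _ => by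
            rw [lap_comb_eq v₀ ψ hψ (fun u => (if u = w then (1:ℝ) else 0) - α u) hβ0 x]]
          have h2 : ∑ x, ((if x = w then (1:ℝ) else 0) - α x) * h x
              = ((if w = w then (1:ℝ) else 0) - α w) * h w := by
            refine Finset.sum_eq_single w (fun x _ hxw => ?_)
              (fun hx => absurd (Finset.mem_univ w) hx)
            by_cases hxS : x ∈ S
            · rw [hS0 x hxS, mul_zero]
            · rw [hsupp x hxS]
              simp [hxw]
          rw [h2, hw1, hsupp w hw]
          simp
        have hcs := Ebil_sq_le hnn
          (fun z => ∑ u, ((if u = w then (1:ℝ) else 0) - α u) * ψ u z) h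
        rw [hEb] at hcs
        rw [div_le_iff₀ hCpos]
        rw [← hCdef] at hcs
        nlinarith [hcs]
      -- the optimal α
      have hβ'eq : ∀ u, (if u = w then (1:ℝ) else 0)
          - (if u = w then 0 else -(C⁻¹ * lap c h u)) = C⁻¹ * lap c h u := by
        intro u
        by_cases hu : u = w
        · subst hu
          rw [if_pos rfl, if_pos rfl, hlapw, sub_zero]
          field_simp
        · simp [hu]
      have hsupp' : ∀ u, u ∉ S → (if u = w then (0:ℝ) else -(C⁻¹ * lap c h u)) = 0 := by
        intro u hu
        by_cases huw : u = w
        · simp [huw]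
        · simp [huw, hlap0 u huw hu]
      have hβ'0 : ∑ u, ((if u = w then (1:ℝ) else 0)
          - (if u = w then 0 else -(C⁻¹ * lap c h u))) = 0 := by
        rw [Finset.sum_congr rfl fun u _ => hβ'eq u, ← Finset.mul_sum, sum_lap hsymm, mul_zero]
      have hsum' : ∑ u, (if u = w then (0:ℝ) else -(C⁻¹ * lap c h u)) = 1 := by
        have e1 : ∀ u, (if u = w then (0:ℝ) else -(C⁻¹ * lap c h u))
            = (if u = w then (1:ℝ) else 0) - C⁻¹ * lap c h u := by
          intro u
          have := hβ'eq u
          by_cases hu : u = w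
          · subst hu; simp at this ⊢; linarith
          · simp [hu] at this ⊢
        rw [Finset.sum_congr rfl fun u _ => e1 u, Finset.sum_sub_distrib, sum_delta_one w,
          ← Finset.mul_sum, sum_lap hsymm, mul_zero, sub_zero]
      have hval' : ∫ ω, (η w ω
          - ∑ u, (if u = w then (0:ℝ) else -(C⁻¹ * lap c h u)) * η u ω) ^ 2 ∂μ = 1 / C := by
        rw [hint (fun u => if u = w then (0:ℝ) else -(C⁻¹ * lap c h u))]
        rw [sum_qk_eq_potential hsymm hconn v₀ ψ hψ _ hβ'0 (C⁻¹ • h)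
          (fun x => by rw [lap_smul]; exact (hβ'eq x).symm)]
        have hstep : ∑ x, (C⁻¹ • h) x * ((if x = w then (1:ℝ) else 0)
            - (if x = w then 0 else -(C⁻¹ * lap c h x)))
            = C⁻¹ * (C⁻¹ * ∑ x, lap c h x * h x) := by
          rw [Finset.mul_sum, Finset.mul_sum]
          refine Finset.sum_congr rfl fun x _ => ?_
          rw [hβ'eq x]
          simp only [Pi.smul_apply, smul_eq_mul]
          ring
        rw [hstep, ← Ebil_eq_sum_lap hsymm, Ebil_self, ← hCdef]
        field_simp
      have hmemT : Real.sqrt (1 / C) ∈ {t : ℝ | ∃ α : V → ℝ, (∀ u, u ∉ S → α u = 0) ∧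
          (∑ u, α u) = 1 ∧
          t = Real.sqrt (∫ ω, (η w ω - ∑ u, α u * η u ω) ^ 2 ∂μ)} :=
        ⟨fun u => if u = w then (0:ℝ) else -(C⁻¹ * lap c h u), hsupp', hsum',
          by rw [hval']⟩
      have hbddT : ∀ t ∈ {t : ℝ | ∃ α : V → ℝ, (∀ u, u ∉ S → α u = 0) ∧ (∑ u, α u) = 1 ∧
          t = Real.sqrt (∫ ω, (η w ω - ∑ u, α u * η u ω) ^ 2 ∂μ)}, (0:ℝ) ≤ t := by
        rintro t ⟨α, _, _, rfl⟩
        exact Real.sqrt_nonneg _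
      have hlowT : ∀ t ∈ {t : ℝ | ∃ α : V → ℝ, (∀ u, u ∉ S → α u = 0) ∧ (∑ u, α u) = 1 ∧
          t = Real.sqrt (∫ ω, (η w ω - ∑ u, α u * η u ω) ^ 2 ∂μ)},
          Real.sqrt (1 / C) ≤ t := by
        rintro t ⟨α, h1, h2, rfl⟩
        exact Real.sqrt_le_sqrt (hlow α h1 h2)
      rw [effRes, hcond]
      exact le_antisymm (le_csInf ⟨_, hmemT⟩ hlowT) (csInf_le ⟨0, hbddT⟩ hmemT)
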